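/- There exists a constant C > 0 such that for every integer n ≥ 1 and all b, b' ∈ (0,1), |f_n(b) − f_n(b')| ≤ C |b − b'| / n, where f_n(b) = ( J_{n−1}(b) − b^{2n} J_{n+1}(b) ) / ( J_{n−1}(b) + b^{2n} J_{n+1}(b) ). -/

import Mathlib

open Real Set

/-- Bessel function of the first kind of integer order, via the Poisson integral
representation. -/
noncomputable def besselJ (n : ℕ) (r : ℝ) : ℝ :=
  r ^ n / (2 ^ n * Real.Gamma ((n : ℝ) + 1 / 2) * Real.sqrt Real.pi) *
    ∫ t in (-1 : ℝ)..1, Real.cos (r * t) * (1 - t ^ 2) ^ ((n : ℝ) - 1 / 2)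

/-- `f_n(b) = c_n(b,1)/n`, the normalized `n`-th eigenvalue of the Dirichlet-to-Neumann
map for the one-step radial potential `q = χ_{(0,b)}(|x|)` on the unit disk. -/
noncomputable def fEig (n : ℕ) (b : ℝ) : ℝ :=
  (besselJ (n - 1) b - b ^ (2 * n) * besselJ (n + 1) b) /
    (besselJ (n - 1) b + b ^ (2 * n) * besselJ (n + 1) b)

open MeasureTheory intervalIntegral

noncomputable def besselW (s : ℝ) : ℝ := ∫ t in (-1:ℝ)..1, (1 - t ^ 2) ^ s

noncomputable def besselP (s b : ℝ) : ℝ :=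
  ∫ t in (-1:ℝ)..1, Real.cos (b * t) * (1 - t ^ 2) ^ s

lemma besselJ_eq (k : ℕ) (b : ℝ) :
    besselJ k b = b ^ k / (2 ^ k * Real.Gamma ((k : ℝ) + 1 / 2) * Real.sqrt Real.pi) *
      besselP ((k : ℝ) - 1 / 2) b := rfl

lemma besselAux_abs_cos_sub_cos (x y : ℝ) : |Real.cos x - Real.cos y| ≤ |x - y| := by
  rw [Real.cos_sub_cos]
  have h1 : |Real.sin ((x+y)/2)| ≤ 1 := Real.abs_sin_le_one _
  have h2 : |Real.sin ((x-y)/2)| ≤ |(x-y)/2| := Real.abs_sin_le_abs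
  calc |(-2) * Real.sin ((x+y)/2) * Real.sin ((x-y)/2)|
      = 2 * (|Real.sin ((x+y)/2)| * |Real.sin ((x-y)/2)|) := by
        rw [abs_mul, abs_mul, abs_neg, abs_two]; ring
    _ ≤ 2 * (1 * |(x-y)/2|) :=
        mul_le_mul_of_nonneg_left
          (mul_le_mul h1 h2 (abs_nonneg _) zero_le_one) (by norm_num)
    _ = |x - y| := by rw [abs_div, abs_two]; ring

lemma besselAux_abs_pow_sub_pow {x y : ℝ} (hx : |x| ≤ 1) (hy : |y| ≤ 1) (m : ℕ) :
    |x ^ m - y ^ m| ≤ m * |x - y| := by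
  induction m with
  | zero => simp
  | succ k ih =>
    have hdec : x ^ (k+1) - y ^ (k+1) = x * (x ^ k - y ^ k) + (x - y) * y ^ k := by ring
    have hyk : |y ^ k| ≤ 1 := by
      rw [abs_pow]; exact pow_le_one₀ (abs_nonneg _) hy
    calc |x ^ (k+1) - y ^ (k+1)|
        ≤ |x * (x ^ k - y ^ k)| + |(x - y) * y ^ k| := by rw [hdec]; exact abs_add_le _ _
      _ = |x| * |x ^ k - y ^ k| + |x - y| * |y ^ k| := by rw [abs_mul, abs_mul]
      _ ≤ 1 * ((k : ℝ) * |x - y|) + |x - y| * 1 := by gcongr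
      _ = ((k : ℕ) + 1 : ℕ) * |x - y| := by push_cast; ring

lemma besselAux_weight_int {s : ℝ} (hs : -(1:ℝ)/2 ≤ s) :
    IntervalIntegrable (fun t : ℝ => (1 - t ^ 2) ^ s) volume (-1) 1 := by
  rcases le_or_gt 0 s with h0 | h0
  · exact ((continuous_const.sub (continuous_pow 2)).rpow_const
      (fun x => Or.inr h0)).intervalIntegrable _ _
  · have hg1 : IntervalIntegrable (fun t : ℝ => (1 - t) ^ s) volume (-1) 1 := by
      have := (intervalIntegrable_rpow' (a := 2) (b := 0)
        (by linarith : (-1:ℝ) < s)).comp_sub_left 1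
      norm_num at this; exact this
    have hg2 : IntervalIntegrable (fun t : ℝ => (1 + t) ^ s) volume (-1) 1 := by
      have := (intervalIntegrable_rpow' (a := 0) (b := 2)
        (by linarith : (-1:ℝ) < s)).comp_add_left 1
      norm_num at this; exact this
    apply (hg1.add hg2).mono_fun'
    · exact ((by fun_prop : Measurable fun t : ℝ => (1 - t ^ 2) ^ s)).aestronglyMeasurable
    · rw [uIoc_of_le (by norm_num : (-1:ℝ) ≤ 1)]
      refine (ae_restrict_iff' measurableSet_Ioc).mpr (Filter.Eventually.of_forall ?_)
      intro x hx
      show ‖(1 - x ^ 2) ^ s‖ ≤ (1 - x) ^ s + (1 + x) ^ s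
      have hb1 : (0:ℝ) ≤ 1 - x := by linarith [hx.2]
      have hb2 : (0:ℝ) ≤ 1 + x := by linarith [hx.1]
      have h1 : (0:ℝ) ≤ (1-x) ^ s := Real.rpow_nonneg hb1 _
      have h2 : (0:ℝ) ≤ (1+x) ^ s := Real.rpow_nonneg hb2 _
      have hfac : (1 - x ^ 2) = (1-x) * (1+x) := by ring
      rw [Real.norm_eq_abs, abs_of_nonneg (Real.rpow_nonneg (by nlinarith) _), hfac,
        Real.mul_rpow hb1 hb2]
      rcases le_or_gt 0 x with hx0 | hx0
      · have : (1+x) ^ s ≤ 1 :=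
          Real.rpow_le_one_of_one_le_of_nonpos (by linarith) h0.le
        nlinarith
      · have : (1-x) ^ s ≤ 1 :=
          Real.rpow_le_one_of_one_le_of_nonpos (by linarith) h0.le
        nlinarith

lemma besselAux_cosw_int {s : ℝ} (hs : -(1:ℝ)/2 ≤ s) (b : ℝ) :
    IntervalIntegrable (fun t : ℝ => Real.cos (b * t) * (1 - t ^ 2) ^ s) volume (-1) 1 := by
  apply (besselAux_weight_int hs).mono_fun
  · exact ((by fun_prop :
      Measurable fun t : ℝ => Real.cos (b * t) * (1 - t ^ 2) ^ s)).aestronglyMeasurable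
  · refine Filter.Eventually.of_forall fun x => ?_
    show ‖Real.cos (b * x) * (1 - x ^ 2) ^ s‖ ≤ ‖(1 - x ^ 2) ^ s‖
    simp only [Real.norm_eq_abs, abs_mul]
    have h1 := Real.abs_cos_le_one (b * x)
    nlinarith [abs_nonneg ((1 - x ^ 2) ^ s)]

lemma besselAux_W_pos {s : ℝ} (hs : -(1:ℝ)/2 ≤ s) : 0 < besselW s := by
  refine intervalIntegral_pos_of_pos_on (besselAux_weight_int hs) ?_ (by norm_num)
  intro x hx
  exact Real.rpow_pos_of_pos (by nlinarith [hx.1, hx.2]) _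

lemma besselAux_P_le {s : ℝ} (hs : -(1:ℝ)/2 ≤ s) {b : ℝ} (hb : b ∈ Icc (0:ℝ) 1) :
    besselP s b ≤ besselW s := by
  refine integral_mono_on (by norm_num) (besselAux_cosw_int hs b)
    (besselAux_weight_int hs) ?_
  intro x hx
  have h0 : (0:ℝ) ≤ (1 - x ^ 2) ^ s :=
    Real.rpow_nonneg (by nlinarith [hx.1, hx.2]) _
  exact mul_le_of_le_one_left h0 (Real.cos_le_one _)

lemma besselAux_le_P {s : ℝ} (hs : -(1:ℝ)/2 ≤ s) {b : ℝ} (hb : b ∈ Icc (0:ℝ) 1) :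
    Real.cos 1 * besselW s ≤ besselP s b := by
  rw [besselW, ← intervalIntegral.integral_const_mul]
  refine integral_mono_on (by norm_num) ((besselAux_weight_int hs).const_mul _)
    (besselAux_cosw_int hs b) ?_
  intro x hx
  have h0 : (0:ℝ) ≤ (1 - x ^ 2) ^ s :=
    Real.rpow_nonneg (by nlinarith [hx.1, hx.2]) _
  have habs : |b * x| ≤ 1 := by
    rw [abs_mul]
    have h1 : |b| ≤ 1 := by rw [abs_of_nonneg hb.1]; exact hb.2
    have h2 : |x| ≤ 1 := abs_le.mpr ⟨hx.1, hx.2⟩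
    nlinarith [abs_nonneg b, abs_nonneg x]
  have hcos : Real.cos 1 ≤ Real.cos (b * x) := by
    rw [← Real.cos_abs (b * x)]
    exact Real.cos_le_cos_of_nonneg_of_le_pi (abs_nonneg _)
      (by linarith [Real.pi_gt_three]) habs
  exact mul_le_mul_of_nonneg_right hcos h0

lemma besselAux_P_lip {s : ℝ} (hs : -(1:ℝ)/2 ≤ s) (b b' : ℝ) :
    |besselP s b - besselP s b'| ≤ |b - b'| * besselW s := by
  have hsub : besselP s b - besselP s b'
      = ∫ t in (-1:ℝ)..1, (Real.cos (b*t) - Real.cos (b'*t)) * (1 - t ^ 2) ^ s := by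
    rw [besselP, besselP, ← integral_sub (besselAux_cosw_int hs b) (besselAux_cosw_int hs b')]
    congr 1
    funext t
    ring
  have hint : IntervalIntegrable
      (fun t : ℝ => |(Real.cos (b*t) - Real.cos (b'*t)) * (1 - t ^ 2) ^ s|) volume (-1) 1 := by
    have h := ((besselAux_cosw_int hs b).sub (besselAux_cosw_int hs b')).abs
    have heq : (fun x : ℝ => |Real.cos (b*x) * (1-x^2)^s - Real.cos (b'*x) * (1-x^2)^s|)
        = fun t : ℝ => |(Real.cos (b*t) - Real.cos (b'*t)) * (1 - t ^ 2) ^ s| := by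
      funext t; rw [← sub_mul]
    rw [← heq]
    exact h
  rw [hsub]
  calc |∫ t in (-1:ℝ)..1, (Real.cos (b*t) - Real.cos (b'*t)) * (1 - t ^ 2) ^ s|
      ≤ ∫ t in (-1:ℝ)..1, |(Real.cos (b*t) - Real.cos (b'*t)) * (1 - t ^ 2) ^ s| :=
        abs_integral_le_integral_abs (by norm_num)
    _ ≤ ∫ t in (-1:ℝ)..1, |b - b'| * (1 - t ^ 2) ^ s := by
        refine integral_mono_on (by norm_num) hint
          ((besselAux_weight_int hs).const_mul _) ?_
        intro x hx
        have h0 : (0:ℝ) ≤ (1 - x ^ 2) ^ s :=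
          Real.rpow_nonneg (by nlinarith [hx.1, hx.2]) _
        rw [abs_mul, abs_of_nonneg h0]
        have hcc : |Real.cos (b*x) - Real.cos (b'*x)| ≤ |b - b'| := by
          refine (besselAux_abs_cos_sub_cos _ _).trans ?_
          have he : b*x - b'*x = (b - b') * x := by ring
          rw [he, abs_mul]
          have h2 : |x| ≤ 1 := abs_le.mpr ⟨hx.1, hx.2⟩
          nlinarith [abs_nonneg (b - b')]
        exact mul_le_mul_of_nonneg_right hcc h0
    _ = |b - b'| * besselW s := by rw [intervalIntegral.integral_const_mul, besselW]

lemma besselAux_W_mono {s₁ s₂ : ℝ} (hs : -(1:ℝ)/2 ≤ s₁) (h12 : s₁ ≤ s₂) (h2 : s₂ ≠ 0) :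
    besselW s₂ ≤ besselW s₁ := by
  refine integral_mono_on (by norm_num) (besselAux_weight_int (by linarith))
    (besselAux_weight_int hs) ?_
  intro x hx
  have hu0 : (0:ℝ) ≤ 1 - x ^ 2 := by nlinarith [hx.1, hx.2]
  rcases eq_or_lt_of_le hu0 with h | h
  · rw [← h, Real.zero_rpow h2]
    exact Real.rpow_nonneg le_rfl _
  · exact Real.rpow_le_rpow_of_exponent_ge h (by nlinarith [hx.1, hx.2]) h12

set_option maxHeartbeats 1000000 in
theorem fEig_lipschitz :
    ∃ C > 0, ∀ n : ℕ, 1 ≤ n → ∀ b ∈ Set.Ioo (0 : ℝ) 1, ∀ b' ∈ Set.Ioo (0 : ℝ) 1,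
      |fEig n b - fEig n b'| ≤ C * |b - b'| / n := by
  have hc : (0:ℝ) < Real.cos 1 := Real.cos_one_pos
  refine ⟨4 / Real.cos 1 ^ 2, by positivity, ?_⟩
  intro n hn b hb b' hb'
  obtain ⟨m, rfl⟩ : ∃ m, n = m + 1 := ⟨n - 1, (Nat.succ_pred_eq_of_pos hn).symm⟩
  set c := Real.cos 1 with hcdef
  have hc1 : c ≤ 1 := by rw [hcdef]; exact Real.cos_le_one 1
  set s1 : ℝ := (m : ℝ) - 1/2 with hs1def
  set s2 : ℝ := (m : ℝ) + 2 - 1/2 with hs2def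
  have hm0 : (0:ℝ) ≤ (m:ℝ) := Nat.cast_nonneg m
  have hs1 : -(1:ℝ)/2 ≤ s1 := by rw [hs1def]; linarith
  have hs2 : -(1:ℝ)/2 ≤ s2 := by rw [hs2def]; linarith
  set I1 := besselW s1 with hI1def
  set I2 := besselW s2 with hI2def
  have hI1 : 0 < I1 := besselAux_W_pos hs1
  have hI2 : 0 < I2 := besselAux_W_pos hs2
  have hI21 : I2 ≤ I1 := by
    refine besselAux_W_mono hs1 (by rw [hs1def, hs2def]; linarith) ?_
    rw [hs2def]; intro h; linarith [h]
  set K : ℝ := 4 * ((m:ℝ) + 1) ^ 2 - 1 with hKdef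
  have hK : 0 < K := by rw [hKdef]; nlinarith [hm0, sq_nonneg ((m:ℝ))]
  have hkey : 2*(2*(m:ℝ)+6) * ((m:ℝ)+1) ≤ 4 * K := by
    rw [hKdef]; nlinarith [hm0, sq_nonneg ((m:ℝ))]
  -- Gamma computation
  have hGam1 : 0 < Real.Gamma ((m:ℝ) + 1/2) := Real.Gamma_pos_of_pos (by linarith)
  have hGam2 : Real.Gamma ((m:ℝ) + 2 + 1/2)
      = ((m:ℝ) + 3/2) * (((m:ℝ) + 1/2) * Real.Gamma ((m:ℝ) + 1/2)) := by
    have e1 : (m:ℝ) + 2 + 1/2 = ((m:ℝ) + 1 + 1/2) + 1 := by ring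
    have e2 : (m:ℝ) + 1 + 1/2 = ((m:ℝ) + 1/2) + 1 := by ring
    rw [e1, Real.Gamma_add_one (by positivity), e2,
      Real.Gamma_add_one (by positivity)]
    ring_nf
  set κ1 : ℝ := 2 ^ m * Real.Gamma ((m:ℝ) + 1/2) * Real.sqrt Real.pi with hκ1def
  have hsπ : 0 < Real.sqrt Real.pi := Real.sqrt_pos.mpr Real.pi_pos
  have hκ1 : 0 < κ1 := by
    rw [hκ1def]
    exact mul_pos (mul_pos (pow_pos two_pos m) hGam1) hsπ
  have hκ2 : (2:ℝ) ^ (m+2) * Real.Gamma ((m:ℝ) + 2 + 1/2) * Real.sqrt Real.pi = K * κ1 := by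
    rw [hGam2, hκ1def, hKdef, pow_add]
    ring_nf
  clear_value c s1 s2 I1 I2 K κ1
  -- positivity of P
  have hPpos : ∀ s : ℝ, -(1:ℝ)/2 ≤ s → ∀ x : ℝ, x ∈ Ioo (0:ℝ) 1 → 0 < besselP s x := by
    intro s hs x hx
    have h1 := besselAux_le_P hs (b := x) ⟨hx.1.le, hx.2.le⟩
    rw [← hcdef] at h1
    have h2 : 0 < c * besselW s := mul_pos hc (besselAux_W_pos hs)
    linarith
  -- the clean formula for fEig
  have hfeq : ∀ x : ℝ, x ∈ Ioo (0:ℝ) 1 →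
      fEig (m+1) x = (besselP s1 x - x ^ (2*m+4) * besselP s2 x / K)
        / (besselP s1 x + x ^ (2*m+4) * besselP s2 x / K) := by
    intro x hx
    have hx0 : 0 < x := hx.1
    have hP1 : 0 < besselP s1 x := hPpos s1 hs1 x hx
    have hP2 : 0 < besselP s2 x := hPpos s2 hs2 x hx
    rw [fEig]
    have h1 : m + 1 - 1 = m := by omega
    rw [h1, besselJ_eq, besselJ_eq]
    have hcast2 : ((m + 2 : ℕ) : ℝ) = (m:ℝ) + 2 := by push_cast; ring
    rw [hcast2, hκ2, ← hs1def, ← hs2def, ← hκ1def]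
    have hne : x ^ m / κ1 ≠ 0 := ne_of_gt (div_pos (pow_pos hx0 m) hκ1)
    have hrw : x ^ m / κ1 * besselP s1 x
          + x ^ (2*(m+1)) * (x ^ (m+2) / (K * κ1) * besselP s2 x)
        = (x ^ m / κ1) * (besselP s1 x + x ^ (2*m+4) * besselP s2 x / K) := by
      ring
    have hrw' : x ^ m / κ1 * besselP s1 x
          - x ^ (2*(m+1)) * (x ^ (m+2) / (K * κ1) * besselP s2 x)
        = (x ^ m / κ1) * (besselP s1 x - x ^ (2*m+4) * besselP s2 x / K) := by
      ring
    rw [hrw', hrw, mul_div_mul_left _ _ hne]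
  -- bounds
  have hbI : b ∈ Icc (0:ℝ) 1 := ⟨hb.1.le, hb.2.le⟩
  have hbI' : b' ∈ Icc (0:ℝ) 1 := ⟨hb'.1.le, hb'.2.le⟩
  set P1 := besselP s1 b with hP1def
  set P1' := besselP s1 b' with hP1'def
  set P2 := besselP s2 b with hP2def
  set P2' := besselP s2 b' with hP2'def
  set w : ℝ := b ^ (2*m+4) with hwdef
  set w' : ℝ := b' ^ (2*m+4) with hw'def
  have hp1l : c * I1 ≤ P1 := by rw [hcdef, hI1def, hP1def]; exact besselAux_le_P hs1 hbI
  have hp1u : P1 ≤ I1 := by rw [hI1def, hP1def]; exact besselAux_P_le hs1 hbI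
  have hp1l' : c * I1 ≤ P1' := by rw [hcdef, hI1def, hP1'def]; exact besselAux_le_P hs1 hbI'
  have hp1u' : P1' ≤ I1 := by rw [hI1def, hP1'def]; exact besselAux_P_le hs1 hbI'
  have hp2l : c * I2 ≤ P2 := by rw [hcdef, hI2def, hP2def]; exact besselAux_le_P hs2 hbI
  have hp2u : P2 ≤ I2 := by rw [hI2def, hP2def]; exact besselAux_P_le hs2 hbI
  have hp2l' : c * I2 ≤ P2' := by rw [hcdef, hI2def, hP2'def]; exact besselAux_le_P hs2 hbI'
  have hp2u' : P2' ≤ I2 := by rw [hI2def, hP2'def]; exact besselAux_P_le hs2 hbI'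
  have hP1pos : 0 < P1 := lt_of_lt_of_le (mul_pos hc hI1) hp1l
  have hP1pos' : 0 < P1' := lt_of_lt_of_le (mul_pos hc hI1) hp1l'
  have hP2pos : 0 < P2 := lt_of_lt_of_le (mul_pos hc hI2) hp2l
  have hP2pos' : 0 < P2' := lt_of_lt_of_le (mul_pos hc hI2) hp2l'
  have hlip1 : |P1 - P1'| ≤ |b - b'| * I1 := by rw [hI1def, hP1def, hP1'def]; exact besselAux_P_lip hs1 b b'
  have hlip2 : |P2 - P2'| ≤ |b - b'| * I2 := by rw [hI2def, hP2def, hP2'def]; exact besselAux_P_lip hs2 b b'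
  have hw0 : 0 ≤ w := by rw [hwdef]; exact pow_nonneg hb.1.le _
  have hw0' : 0 ≤ w' := by rw [hw'def]; exact pow_nonneg hb'.1.le _
  have hw1 : w ≤ 1 := by rw [hwdef]; exact pow_le_one₀ hb.1.le hb.2.le
  have hw1' : w' ≤ 1 := by rw [hw'def]; exact pow_le_one₀ hb'.1.le hb'.2.le
  have hwlip : |w - w'| ≤ (2*(m:ℝ)+4) * |b - b'| := by
    have hbabs : |b| ≤ 1 := by rw [abs_of_nonneg hb.1.le]; exact hb.2.le
    have hbabs' : |b'| ≤ 1 := by rw [abs_of_nonneg hb'.1.le]; exact hb'.2.le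
    have := besselAux_abs_pow_sub_pow hbabs hbabs' (2*m+4)
    rw [hwdef, hw'def]
    calc |b ^ (2*m+4) - b' ^ (2*m+4)| ≤ ((2*m+4 : ℕ) : ℝ) * |b - b'| := this
      _ = (2*(m:ℝ)+4) * |b - b'| := by push_cast; ring
  set D : ℝ := P1 + w * P2 / K with hDdef
  set D' : ℝ := P1' + w' * P2' / K with hD'def
  have hDl : c * I1 ≤ D := by
    have h0 : 0 ≤ w * P2 / K := div_nonneg (mul_nonneg hw0 hP2pos.le) hK.le
    rw [hDdef]; linarith
  have hDl' : c * I1 ≤ D' := by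
    have h0 : 0 ≤ w' * P2' / K := div_nonneg (mul_nonneg hw0' hP2pos'.le) hK.le
    rw [hD'def]; linarith
  have hD : 0 < D := lt_of_lt_of_le (mul_pos hc hI1) hDl
  have hD' : 0 < D' := lt_of_lt_of_le (mul_pos hc hI1) hDl'
  -- the difference formula
  have hdiff : fEig (m+1) b - fEig (m+1) b'
      = (2/K) * (w' * P1 * P2' - w * P1' * P2) / (D * D') := by
    rw [hfeq b hb, hfeq b' hb', ← hP1def, ← hP2def, ← hP1'def, ← hP2'def,
      ← hwdef, ← hw'def, ← hDdef, ← hD'def, div_sub_div _ _ hD.ne' hD'.ne']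
    congr 1
    rw [hDdef, hD'def]
    ring
  set t : ℝ := |b - b'| with htdef
  have ht0 : 0 ≤ t := abs_nonneg _
  -- numerator estimate
  have hE : |w' * P1 * P2' - w * P1' * P2| ≤ (2*(m:ℝ)+6) * t * (I1 * I2) := by
    have hdec : w' * P1 * P2' - w * P1' * P2
        = w' * P2' * (P1 - P1') + P1' * P2' * (w' - w) + P1' * w * (P2' - P2) := by ring
    have habs1 : |w'| ≤ 1 := by rw [abs_of_nonneg hw0']; exact hw1'
    have habsw : |w| ≤ 1 := by rw [abs_of_nonneg hw0]; exact hw1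
    have habs2 : |P2'| ≤ I2 := by rw [abs_of_nonneg hP2pos'.le]; exact hp2u'
    have habs3 : |P1'| ≤ I1 := by rw [abs_of_nonneg hP1pos'.le]; exact hp1u'
    have hwlip' : |w' - w| ≤ (2*(m:ℝ)+4) * t := by rw [abs_sub_comm]; exact hwlip
    have hlip2' : |P2' - P2| ≤ t * I2 := by rw [abs_sub_comm]; exact hlip2
    calc |w' * P1 * P2' - w * P1' * P2|
        ≤ |w' * P2' * (P1 - P1')| + |P1' * P2' * (w' - w)| + |P1' * w * (P2' - P2)| := by
          rw [hdec]
          exact (abs_add_le _ _).trans (add_le_add_left (abs_add_le _ _) _)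
      _ = |w'| * |P2'| * |P1 - P1'| + |P1'| * |P2'| * |w' - w| + |P1'| * |w| * |P2' - P2| := by
          rw [abs_mul, abs_mul, abs_mul, abs_mul, abs_mul, abs_mul]
      _ ≤ 1 * I2 * (t * I1) + I1 * I2 * ((2*(m:ℝ)+4) * t) + I1 * 1 * (t * I2) := by
          have t1 : |w'| * |P2'| * |P1 - P1'| ≤ 1 * I2 * (t * I1) :=
            mul_le_mul (mul_le_mul habs1 habs2 (abs_nonneg _) zero_le_one) hlip1
              (abs_nonneg _) (mul_nonneg zero_le_one hI2.le)
          have t2 : |P1'| * |P2'| * |w' - w| ≤ I1 * I2 * ((2*(m:ℝ)+4) * t) :=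
            mul_le_mul (mul_le_mul habs3 habs2 (abs_nonneg _) hI1.le) hwlip'
              (abs_nonneg _) (mul_nonneg hI1.le hI2.le)
          have t3 : |P1'| * |w| * |P2' - P2| ≤ I1 * 1 * (t * I2) :=
            mul_le_mul (mul_le_mul habs3 habsw (abs_nonneg _) hI1.le) hlip2'
              (abs_nonneg _) (mul_nonneg hI1.le zero_le_one)
          exact add_le_add (add_le_add t1 t2) t3
      _ = (2*(m:ℝ)+6) * t * (I1 * I2) := by ring
  -- put it together
  have hfinal : |fEig (m+1) b - fEig (m+1) b'|
      ≤ (2/K) * ((2*(m:ℝ)+6) * t * (I1 * I2)) / ((c*I1) * (c*I1)) := by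
    rw [hdiff, abs_div, abs_mul, abs_of_pos (mul_pos hD hD'),
      abs_of_pos (div_pos two_pos hK)]
    have h2K : (0:ℝ) ≤ 2/K := (div_pos two_pos hK).le
    refine div_le_div₀
      (mul_nonneg h2K (mul_nonneg (mul_nonneg (by linarith : (0:ℝ) ≤ 2*(m:ℝ)+6) ht0)
        (mul_nonneg hI1.le hI2.le)))
      (mul_le_mul_of_nonneg_left hE h2K)
      (mul_pos (mul_pos hc hI1) (mul_pos hc hI1))
      (mul_le_mul hDl hDl' (mul_nonneg hc.le hI1.le) hD.le)
  refine hfinal.trans ?_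
  have hstep : (2/K) * ((2*(m:ℝ)+6) * t * (I1 * I2)) / ((c*I1) * (c*I1))
      = (2*(2*(m:ℝ)+6)/(K * c^2)) * t * (I2/I1) := by
    field_simp [hK.ne', hc.ne', hI1.ne']
  rw [hstep]
  have hquot : I2 / I1 ≤ 1 := (div_le_one hI1).mpr hI21
  have hstep2 : (2*(2*(m:ℝ)+6)/(K * c^2)) * t * (I2/I1) ≤ (2*(2*(m:ℝ)+6)/(K * c^2)) * t := by
    have hcn : (0:ℝ) ≤ (2*(2*(m:ℝ)+6)/(K * c^2)) * t :=
      mul_nonneg (div_nonneg (by linarith) (mul_nonneg hK.le (sq_nonneg c))) ht0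
    have h := mul_le_mul_of_nonneg_left hquot hcn
    simpa [mul_one] using h
  refine hstep2.trans ?_
  have hcoef : 2*(2*(m:ℝ)+6)/(K * c^2) ≤ 4 / c^2 / ((m:ℝ)+1) := by
    rw [div_div, div_le_div_iff₀ (mul_pos hK (pow_pos hc 2))
      (mul_pos (pow_pos hc 2) (by linarith : (0:ℝ) < (m:ℝ)+1))]
    calc 2*(2*(m:ℝ)+6) * (c^2*((m:ℝ)+1))
        = (2*(2*(m:ℝ)+6) * ((m:ℝ)+1)) * c^2 := by ring
      _ ≤ (4 * K) * c^2 := mul_le_mul_of_nonneg_right hkey (sq_nonneg c)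
      _ = 4 * (K * c^2) := by ring
  calc (2*(2*(m:ℝ)+6)/(K * c^2)) * t ≤ (4 / c^2 / ((m:ℝ)+1)) * t :=
        mul_le_mul_of_nonneg_right hcoef ht0
    _ = 4 / c^2 * t / ((m+1 : ℕ) : ℝ) := by push_cast; ring
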